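/- arXiv:2411.07582 — 2 statements merged into one kernel-verified Lean document; each statement's English description precedes it below -/
import Mathlib

section
/- Let Λ be a row-finite k-graph with no sources, F the free commutative monoid on Λ⁰, and ∼ the congruence on F generated by the relations u ∼ Σ_{λ ∈ uΛ^{e_i}} s(λ) (for each vertex u and each i ∈ {1,…,k}). Then for α, β ∈ F∖{0}, α ∼ β if and only if there exists γ ∈ F∖{0} such that α → γ and β → γ, where → is the reflexive–transitive closure of the single-generator replacement moves. -/
/-- A (small) `k`-graph: a small category `Λ` with vertex set `V`, path set `P`,
range and source maps `r, s`, a degree functor `d : Λ → ℕᵏ` satisfying the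
unique factorization property. -/
structure KGraph (k : ℕ) where
  V : Type
  P : Type
  r : P → V
  s : P → V
  d : P → Fin k → ℕ
  ident : V → P
  comp : (p q : P) → s p = r q → P
  r_ident : ∀ v, r (ident v) = v
  s_ident : ∀ v, s (ident v) = v
  d_ident : ∀ v, d (ident v) = 0
  r_comp : ∀ p q h, r (comp p q h) = r p
  s_comp : ∀ p q h, s (comp p q h) = s q
  d_comp : ∀ p q h, d (comp p q h) = d p + d q
  ident_comp : ∀ (p : P) (h : s (ident (r p)) = r p), comp (ident (r p)) p h = p
  comp_ident : ∀ (p : P) (h : s p = r (ident (s p))), comp p (ident (s p)) h = p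
  comp_assoc : ∀ (p q t : P) (h1 : s p = r q) (h2 : s q = r t)
      (h3 : s (comp p q h1) = r t) (h4 : s p = r (comp q t h2)),
      comp (comp p q h1) t h3 = comp p (comp q t h2) h4
  factor : ∀ (p : P) (m n : Fin k → ℕ), d p = m + n →
      ∃! qt : P × P, ∃ h : s qt.1 = r qt.2,
        comp qt.1 qt.2 h = p ∧ d qt.1 = m ∧ d qt.2 = n

namespace KGraph

variable {k : ℕ}

/-- `vΛⁿ`, the set of paths with range `v` and degree `n`. -/
def pathsSet (Λ : KGraph k) (v : Λ.V) (n : Fin k → ℕ) : Set Λ.P :=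
  {p | Λ.r p = v ∧ Λ.d p = n}

/-- `Λ` is row-finite if every `vΛⁿ` is finite. -/
def RowFinite (Λ : KGraph k) : Prop := ∀ v n, (Λ.pathsSet v n).Finite

/-- `Λ` has no sources if every `vΛⁿ` is nonempty. -/
def NoSources (Λ : KGraph k) : Prop := ∀ v n, (Λ.pathsSet v n).Nonempty

/-- The element `Σ_{λ ∈ vΛⁿ} s(λ)` of the free commutative monoid `ℕ^(Λ⁰)`. -/
noncomputable def vSum (Λ : KGraph k) (hfin : Λ.RowFinite) (v : Λ.V) (n : Fin k → ℕ) :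
    Λ.V →₀ ℕ :=
  ∑ p ∈ (hfin v n).toFinset, Finsupp.single (Λ.s p) 1

end KGraph

namespace KGraph

/-- One-step generating relation `u ∼ Σ_{λ ∈ uΛ^{e_i}} s(λ)` (on single generators). -/
noncomputable def OneStepRel (Λ : KGraph k) (hfin : Λ.RowFinite) :
    (Λ.V →₀ ℕ) → (Λ.V →₀ ℕ) → Prop :=
  fun a b => ∃ (u : Λ.V) (i : Fin k),
    a = Finsupp.single u 1 ∧ b = Λ.vSum hfin u (Pi.single i 1)

/-- Generating relation `u ∼ Σ_{λ ∈ uΛⁿ} s(λ)` for all degrees `n`. -/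
noncomputable def AllRel (Λ : KGraph k) (hfin : Λ.RowFinite) :
    (Λ.V →₀ ℕ) → (Λ.V →₀ ℕ) → Prop :=
  fun a b => ∃ (u : Λ.V) (n : Fin k → ℕ),
    a = Finsupp.single u 1 ∧ b = Λ.vSum hfin u n

/-- The elementary move `→ᵢ`: replace one occurrence of a generator `u`
by `Σ_{λ ∈ uΛ^{e_i}} s(λ)`. -/
noncomputable def MoveStep (Λ : KGraph k) (hfin : Λ.RowFinite) :
    (Λ.V →₀ ℕ) → (Λ.V →₀ ℕ) → Prop :=
  fun a b => ∃ (u : Λ.V) (i : Fin k) (γ : Λ.V →₀ ℕ),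
    a = γ + Finsupp.single u 1 ∧ b = γ + Λ.vSum hfin u (Pi.single i 1)

/-- The relation `→`: the reflexive–transitive closure of the elementary moves. -/
noncomputable def Move (Λ : KGraph k) (hfin : Λ.RowFinite) :
    (Λ.V →₀ ℕ) → (Λ.V →₀ ℕ) → Prop :=
  Relation.ReflTransGen (MoveStep Λ hfin)

end KGraph


namespace KGraph

variable {k : ℕ} {Λ : KGraph k} (hfin : Λ.RowFinite)

lemma mem_pathsFinset {v : Λ.V} {n : Fin k → ℕ} {p : Λ.P} :
    p ∈ (hfin v n).toFinset ↔ Λ.r p = v ∧ Λ.d p = n := by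
  rw [Set.Finite.mem_toFinset]; rfl

lemma eq_ident_of_d_zero {p : Λ.P} (h : Λ.d p = 0) : p = Λ.ident (Λ.r p) := by
  obtain ⟨qt, _, huniq⟩ := Λ.factor p 0 0 (by simpa using h)
  have h1 : (Λ.ident (Λ.r p), p) = qt :=
    huniq _ ⟨Λ.s_ident (Λ.r p), Λ.ident_comp p _, Λ.d_ident _, h⟩
  have h2 : (p, Λ.ident (Λ.s p)) = qt :=
    huniq _ ⟨(Λ.r_ident (Λ.s p)).symm, Λ.comp_ident p _, h, Λ.d_ident _⟩
  have := h1.trans h2.symm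
  exact (congrArg Prod.fst this).symm

lemma vSum_zero (u : Λ.V) : Λ.vSum hfin u 0 = Finsupp.single u 1 := by
  have hset : (hfin u 0).toFinset = {Λ.ident u} := by
    ext p
    rw [mem_pathsFinset hfin, Finset.mem_singleton]
    constructor
    · rintro ⟨h1, h2⟩
      have := eq_ident_of_d_zero (Λ := Λ) h2
      rwa [h1] at this
    · rintro rfl; exact ⟨Λ.r_ident u, Λ.d_ident u⟩
  rw [vSum, hset, Finset.sum_singleton, Λ.s_ident]

lemma vSum_ne_zero (hns : Λ.NoSources) (u : Λ.V) (n : Fin k → ℕ) :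
    Λ.vSum hfin u n ≠ 0 := by
  obtain ⟨p₀, hp₀⟩ := hns u n
  have hp₀' : p₀ ∈ (hfin u n).toFinset := (mem_pathsFinset hfin).2 hp₀
  intro h
  rw [vSum] at h
  have h0 := DFunLike.congr_fun h (Λ.s p₀)
  rw [Finsupp.finset_sum_apply] at h0
  have := Finset.sum_eq_zero_iff.1 h0 p₀ hp₀'
  simp [Finsupp.single_eq_same] at this

/-- The complete development map `T_p`, as an additive monoid hom. -/
noncomputable def develHom (Λ : KGraph k) (hfin : Λ.RowFinite) (p : Fin k → ℕ) :
    (Λ.V →₀ ℕ) →+ (Λ.V →₀ ℕ) :=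
  Finsupp.liftAddHom fun u => (smulAddHom ℕ (Λ.V →₀ ℕ)).flip (Λ.vSum hfin u p)

lemma develHom_single (p : Fin k → ℕ) (u : Λ.V) (n : ℕ) :
    develHom Λ hfin p (Finsupp.single u n) = n • Λ.vSum hfin u p := by
  rw [develHom, Finsupp.liftAddHom_apply_single]
  rfl

lemma vSum_factor (u : Λ.V) (q p : Fin k → ℕ) :
    ∑ x ∈ ((hfin u q).toFinset.sigma fun a => (hfin (Λ.s a) p).toFinset),
        Finsupp.single (Λ.s x.2) (1 : ℕ)
      = Λ.vSum hfin u (q + p) := by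
  rw [vSum]
  refine Finset.sum_bij
    (fun x hx => Λ.comp x.1 x.2
      (((mem_pathsFinset hfin).1 (Finset.mem_sigma.1 hx).2).1.symm)) ?_ ?_ ?_ ?_
  · intro x hx
    obtain ⟨hx1, hx2⟩ := Finset.mem_sigma.1 hx
    obtain ⟨hr1, hd1⟩ := (mem_pathsFinset hfin).1 hx1
    obtain ⟨hr2, hd2⟩ := (mem_pathsFinset hfin).1 hx2
    refine (mem_pathsFinset hfin).2 ⟨?_, ?_⟩
    · rw [Λ.r_comp, hr1]
    · rw [Λ.d_comp, hd1, hd2]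
  · intro x hx y hy hxy
    obtain ⟨hx1, hx2⟩ := Finset.mem_sigma.1 hx
    obtain ⟨hy1, hy2⟩ := Finset.mem_sigma.1 hy
    obtain ⟨hxr1, hxd1⟩ := (mem_pathsFinset hfin).1 hx1
    obtain ⟨hxr2, hxd2⟩ := (mem_pathsFinset hfin).1 hx2
    obtain ⟨hyr1, hyd1⟩ := (mem_pathsFinset hfin).1 hy1
    obtain ⟨hyr2, hyd2⟩ := (mem_pathsFinset hfin).1 hy2
    set P := Λ.comp x.1 x.2 (hxr2.symm) with hP
    have hdP : Λ.d P = q + p := by rw [hP, Λ.d_comp, hxd1, hxd2]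
    obtain ⟨qt, _, huniq⟩ := Λ.factor P q p hdP
    have e1 : (x.1, x.2) = qt := huniq _ ⟨hxr2.symm, rfl, hxd1, hxd2⟩
    have e2 : (y.1, y.2) = qt := huniq _ ⟨hyr2.symm, hxy.symm, hyd1, hyd2⟩
    have e := e1.trans e2.symm
    obtain ⟨x1, x2⟩ := x
    obtain ⟨y1, y2⟩ := y
    simp only [Prod.mk.injEq] at e
    simp [e.1, e.2]
  · intro b hb
    obtain ⟨hrb, hdb⟩ := (mem_pathsFinset hfin).1 hb
    obtain ⟨⟨b1, b2⟩, ⟨hh, hcomp, hd1, hd2⟩, _⟩ := Λ.factor b q p hdb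
    have hb1 : b1 ∈ (hfin u q).toFinset := by
      refine (mem_pathsFinset hfin).2 ⟨?_, hd1⟩
      have := Λ.r_comp b1 b2 hh
      rw [hcomp] at this
      rw [← this, hrb]
    have hb2 : b2 ∈ (hfin (Λ.s b1) p).toFinset :=
      (mem_pathsFinset hfin).2 ⟨hh.symm, hd2⟩
    exact ⟨⟨b1, b2⟩, Finset.mem_sigma.2 ⟨hb1, hb2⟩, hcomp⟩
  · intro x hx
    rw [Λ.s_comp]

lemma develHom_vSum (u : Λ.V) (q p : Fin k → ℕ) :
    develHom Λ hfin p (Λ.vSum hfin u q) = Λ.vSum hfin u (q + p) := by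
  rw [← vSum_factor hfin u q p, Finset.sum_sigma]
  show develHom Λ hfin p (∑ x ∈ (hfin u q).toFinset, Finsupp.single (Λ.s x) 1) = _
  rw [map_sum]
  refine Finset.sum_congr rfl fun x _ => ?_
  rw [develHom_single hfin, one_smul]
  rfl

lemma develHom_zero_apply (α : Λ.V →₀ ℕ) : develHom Λ hfin 0 α = α := by
  induction α using Finsupp.induction_linear with
  | zero => simp
  | add f g hf hg => rw [map_add, hf, hg]
  | single a b =>
    rw [develHom_single hfin, vSum_zero hfin, Finsupp.smul_single, smul_eq_mul, mul_one]

lemma develHom_comp_apply (q p : Fin k → ℕ) (α : Λ.V →₀ ℕ) :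
    develHom Λ hfin p (develHom Λ hfin q α) = develHom Λ hfin (q + p) α := by
  induction α using Finsupp.induction_linear with
  | zero => simp
  | add f g hf hg => rw [map_add, map_add, map_add, hf, hg]
  | single a b =>
    rw [develHom_single hfin, map_nsmul, develHom_vSum hfin, develHom_single hfin]

lemma Move.refl (a : Λ.V →₀ ℕ) : Move Λ hfin a a := Relation.ReflTransGen.refl

lemma Move.trans {a b c : Λ.V →₀ ℕ} (h1 : Move Λ hfin a b) (h2 : Move Λ hfin b c) :
    Move Λ hfin a c := Relation.ReflTransGen.trans h1 h2

lemma MoveStep.add_left {a b : Λ.V →₀ ℕ} (c : Λ.V →₀ ℕ) (h : MoveStep Λ hfin a b) :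
    MoveStep Λ hfin (c + a) (c + b) := by
  obtain ⟨u, i, γ, rfl, rfl⟩ := h
  exact ⟨u, i, c + γ, by rw [add_assoc], by rw [add_assoc]⟩

lemma Move.add_left {a b : Λ.V →₀ ℕ} (c : Λ.V →₀ ℕ) (h : Move Λ hfin a b) :
    Move Λ hfin (c + a) (c + b) :=
  Relation.ReflTransGen.lift (fun x => c + x) (fun _ _ hs => MoveStep.add_left hfin c hs) _ _ h

lemma Move.add {a b c d : Λ.V →₀ ℕ} (h1 : Move Λ hfin a b) (h2 : Move Λ hfin c d) :
    Move Λ hfin (a + c) (b + d) := by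
  refine Move.trans hfin (Move.add_left hfin a h2) ?_
  rw [add_comm a d, add_comm b d]
  exact Move.add_left hfin d h1

lemma move_single (u : Λ.V) (i : Fin k) :
    Move Λ hfin (Finsupp.single u 1) (Λ.vSum hfin u (Pi.single i 1)) :=
  Relation.ReflTransGen.single ⟨u, i, 0, (zero_add _).symm, (zero_add _).symm⟩

lemma move_devel_single (i : Fin k) (α : Λ.V →₀ ℕ) :
    Move Λ hfin α (develHom Λ hfin (Pi.single i 1) α) := by
  induction α using Finsupp.induction_linear with
  | zero => rw [map_zero]; exact Move.refl hfin 0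
  | add f g hf hg => rw [map_add]; exact Move.add hfin hf hg
  | single a b =>
    rw [develHom_single hfin]
    induction b with
    | zero => rw [Finsupp.single_zero, zero_smul]; exact Move.refl hfin 0
    | succ n ih =>
      rw [Finsupp.single_add, succ_nsmul]
      exact Move.add hfin ih (move_single hfin a i)

lemma move_devel_aux : ∀ (N : ℕ) (p : Fin k → ℕ), (∑ i, p i) = N →
    ∀ α : Λ.V →₀ ℕ, Move Λ hfin α (develHom Λ hfin p α) := by
  intro N
  induction N with
  | zero =>
    intro p hp α
    have hp0 : p = 0 := by
      funext j
      exact Finset.sum_eq_zero_iff.1 hp j (Finset.mem_univ j)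
    rw [hp0, develHom_zero_apply hfin]
    exact Move.refl hfin α
  | succ N ih =>
    intro p hp α
    have hex : ∃ i, p i ≠ 0 := by
      by_contra hcon
      push_neg at hcon
      simp [hcon] at hp
    obtain ⟨i, hi⟩ := hex
    set q : Fin k → ℕ := Function.update p i (p i - 1) with hq
    have hqe : q + Pi.single i 1 = p := by
      funext j
      by_cases hj : j = i
      · subst hj
        simp only [Pi.add_apply, hq, Function.update_self, Pi.single_eq_same]
        omega
      · simp [hq, Function.update_of_ne hj, Pi.single_eq_of_ne hj]
    have hqs : (∑ j, q j) = N := by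
      have h1 : (∑ j, p j) = (∑ j, q j) + (∑ j, (Pi.single i 1 : Fin k → ℕ) j) := by
        rw [← hqe]
        exact Finset.sum_add_distrib
      have h2 : (∑ j, (Pi.single i 1 : Fin k → ℕ) j) = 1 := by simp
      omega
    have m1 : Move Λ hfin α (develHom Λ hfin q α) := ih q hqs α
    have m2 : Move Λ hfin (develHom Λ hfin q α)
        (develHom Λ hfin (Pi.single i 1) (develHom Λ hfin q α)) :=
      move_devel_single hfin i _
    have e : develHom Λ hfin (Pi.single i 1) (develHom Λ hfin q α) = develHom Λ hfin p α := by
      rw [develHom_comp_apply hfin, hqe]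
    rw [e] at m2
    exact Move.trans hfin m1 m2

lemma move_devel (p : Fin k → ℕ) (α : Λ.V →₀ ℕ) :
    Move Λ hfin α (develHom Λ hfin p α) :=
  move_devel_aux hfin (∑ i, p i) p rfl α

lemma move_devel_mono (p : Fin k → ℕ) {a b : Λ.V →₀ ℕ} (h : Move Λ hfin a b) :
    Move Λ hfin (develHom Λ hfin p a) (develHom Λ hfin p b) := by
  induction h with
  | refl => exact Move.refl hfin _
  | tail _ hbc ih =>
    refine Move.trans hfin ih ?_
    obtain ⟨u, i, γ, rfl, rfl⟩ := hbc
    rw [map_add, map_add, develHom_single hfin, one_smul, develHom_vSum hfin]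
    refine Move.add hfin (Move.refl hfin _) ?_
    have h2 : develHom Λ hfin (Pi.single i 1) (Λ.vSum hfin u p)
        = Λ.vSum hfin u (Pi.single i 1 + p) := by
      rw [develHom_vSum hfin, add_comm]
    rw [← h2]
    exact move_devel_single hfin i _

lemma MoveStep.to_devel {a b : Λ.V →₀ ℕ} (h : MoveStep Λ hfin a b) :
    ∃ i : Fin k, Move Λ hfin b (develHom Λ hfin (Pi.single i 1) a) := by
  obtain ⟨u, i, γ, rfl, rfl⟩ := h
  refine ⟨i, ?_⟩
  rw [map_add, develHom_single hfin, one_smul]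
  exact Move.add hfin (move_devel_single hfin i γ) (Move.refl hfin _)

lemma reach_devel {a b : Λ.V →₀ ℕ} (h : Move Λ hfin a b) :
    ∃ p : Fin k → ℕ, Move Λ hfin b (develHom Λ hfin p a) := by
  induction h with
  | refl => exact ⟨0, by rw [develHom_zero_apply hfin]; exact Move.refl hfin a⟩
  | tail _ hbc ih =>
    obtain ⟨p, hp⟩ := ih
    obtain ⟨i, hi⟩ := MoveStep.to_devel hfin hbc
    refine ⟨p + Pi.single i 1, Move.trans hfin hi ?_⟩
    have hm := move_devel_mono hfin (Pi.single i 1) hp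
    rwa [develHom_comp_apply hfin] at hm

lemma Move.ne_zero (hns : Λ.NoSources) {a b : Λ.V →₀ ℕ} (h : Move Λ hfin a b)
    (ha : a ≠ 0) : b ≠ 0 := by
  induction h with
  | refl => exact ha
  | tail _ hbc _ =>
    obtain ⟨u, i, γ, rfl, rfl⟩ := hbc
    intro h0
    apply vSum_ne_zero hfin hns u (Pi.single i 1)
    ext v
    have hv := DFunLike.congr_fun h0 v
    simp only [Finsupp.add_apply, Finsupp.coe_zero, Pi.zero_apply] at hv ⊢
    omega

/-- The join relation as an additive congruence. -/
noncomputable def joinCon (Λ : KGraph k) (hfin : Λ.RowFinite) : AddCon (Λ.V →₀ ℕ) where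
  r a b := ∃ γ, Move Λ hfin a γ ∧ Move Λ hfin b γ
  iseqv := by
    refine ⟨fun a => ⟨a, Move.refl hfin a, Move.refl hfin a⟩, ?_, ?_⟩
    · rintro a b ⟨γ, h1, h2⟩
      exact ⟨γ, h2, h1⟩
    · rintro a b c ⟨γ₁, ha, hb1⟩ ⟨γ₂, hb2, hc⟩
      obtain ⟨p, hp⟩ := reach_devel hfin hb1
      obtain ⟨q, hq⟩ := reach_devel hfin hb2
      refine ⟨develHom Λ hfin (p + q) b, Move.trans hfin ha (Move.trans hfin hp ?_),
        Move.trans hfin hc (Move.trans hfin hq ?_)⟩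
      · have h2 := move_devel hfin q (develHom Λ hfin p b)
        rwa [develHom_comp_apply hfin] at h2
      · have h2 := move_devel hfin p (develHom Λ hfin q b)
        rw [develHom_comp_apply hfin] at h2
        rwa [add_comm q p] at h2
  add' := by
    rintro a b c d ⟨γ₁, ha, hb⟩ ⟨γ₂, hc, hd⟩
    exact ⟨γ₁ + γ₂, Move.add hfin ha hc, Move.add hfin hb hd⟩

lemma move_con {a b : Λ.V →₀ ℕ} (h : Move Λ hfin a b) :
    addConGen (OneStepRel Λ hfin) a b := by
  induction h with
  | refl => exact (addConGen (OneStepRel Λ hfin)).refl a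
  | tail _ hbc ih =>
    refine (addConGen (OneStepRel Λ hfin)).trans ih ?_
    obtain ⟨u, i, γ, rfl, rfl⟩ := hbc
    exact (addConGen (OneStepRel Λ hfin)).add ((addConGen (OneStepRel Λ hfin)).refl γ)
      (AddConGen.Rel.of _ _ ⟨u, i, rfl, rfl⟩)

end KGraph

open KGraph in
/-- **Confluence lemma.** Let `Λ` be a row-finite `k`-graph with no sources, `F` the
free commutative monoid on `Λ⁰` and `∼` the congruence generated by the relations
`u ∼ Σ_{λ ∈ uΛ^{e_i}} s(λ)`. Then for nonzero `α, β`, `α ∼ β` iff there is a nonzero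
`γ` with `α → γ` and `β → γ`. -/
theorem stmt3 {k : ℕ} (Λ : KGraph k) (hfin : Λ.RowFinite) (hns : Λ.NoSources)
    (α β : Λ.V →₀ ℕ) (hα : α ≠ 0) (hβ : β ≠ 0) :
    (addConGen (OneStepRel Λ hfin)) α β ↔
      ∃ γ : Λ.V →₀ ℕ, γ ≠ 0 ∧ Move Λ hfin α γ ∧ Move Λ hfin β γ := by
  constructor
  · intro h
    have hbase : ∀ x y, OneStepRel Λ hfin x y → (joinCon Λ hfin) x y := by
      rintro x y ⟨u, i, rfl, rfl⟩
      exact ⟨Λ.vSum hfin u (Pi.single i 1), move_single hfin u i,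
        Move.refl hfin _⟩
    obtain ⟨γ, h1, h2⟩ := AddCon.addConGen_le.2 hbase h
    exact ⟨γ, Move.ne_zero hfin hns h1 hα, h1, h2⟩
  · rintro ⟨γ, _, h1, h2⟩
    exact (addConGen (OneStepRel Λ hfin)).trans (move_con hfin h1)
      ((addConGen (OneStepRel Λ hfin)).symm (move_con hfin h2))
end

section
/- Let Λ be a row-finite k-graph with no sources. The assignments H ↦ ⟨H⟩ (the ℤ^k-order ideal of T_Λ generated by {v(0) : v ∈ H}) and J ↦ H_J := {v : v(0) ∈ J} are mutually inverse, order-preserving bijections between the lattice of hereditary saturated subsets of Λ⁰ and the lattice of ℤ^k-order ideals of T_Λ; hence these lattices are isomorphic. -/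
namespace KGraph

/-- The free commutative monoid on `Λ⁰ × ℤᵏ`. -/
abbrev TalF (Λ : KGraph k) : Type := (Λ.V × (Fin k → ℤ)) →₀ ℕ

/-- The defining relations of the talented monoid:
`v(n) = Σ_{α ∈ vΛ^{e_i}} s(α)(n + e_i)`. -/
noncomputable def TalRel (Λ : KGraph k) (hfin : Λ.RowFinite) : TalF Λ → TalF Λ → Prop :=
  fun a b => ∃ (v : Λ.V) (n : Fin k → ℤ) (i : Fin k),
    a = Finsupp.single (v, n) 1 ∧
    b = ∑ p ∈ (hfin v (Pi.single i 1)).toFinset,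
          Finsupp.single (Λ.s p, n + Pi.single i 1) 1

/-- The congruence generated by the defining relations of the talented monoid. -/
noncomputable def TalCon (Λ : KGraph k) (hfin : Λ.RowFinite) : AddCon (TalF Λ) :=
  addConGen (TalRel Λ hfin)

/-- The talented monoid `T_Λ`. -/
abbrev Tal (Λ : KGraph k) (hfin : Λ.RowFinite) : Type := (TalCon Λ hfin).Quotient

/-- The quotient map `ℕ^(Λ⁰ × ℤᵏ) → T_Λ`. -/
noncomputable def tmk (Λ : KGraph k) (hfin : Λ.RowFinite) : TalF Λ → Tal Λ hfin :=
  (TalCon Λ hfin).mk'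

/-- Shift of states on the free commutative monoid; it induces the `ℤᵏ`-action on `T_Λ`. -/
noncomputable def shiftF (Λ : KGraph k) (p : Fin k → ℤ) : TalF Λ → TalF Λ :=
  Finsupp.mapDomain (fun q => (q.1, q.2 + p))

/-- A `ℤᵏ`-order ideal of `T_Λ`: a submonoid, downward closed in the algebraic
preorder, and closed under the `ℤᵏ`-action (expressed on representatives). -/
noncomputable def IsOrderIdeal (Λ : KGraph k) (hfin : Λ.RowFinite)
    (J : Set (Tal Λ hfin)) : Prop :=
  (0 : Tal Λ hfin) ∈ J ∧
  (∀ a b, a ∈ J → b ∈ J → a + b ∈ J) ∧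
  (∀ a b : Tal Λ hfin, a + b ∈ J → a ∈ J) ∧
  (∀ (p : Fin k → ℤ) (a : TalF Λ), tmk Λ hfin a ∈ J → tmk Λ hfin (shiftF Λ p a) ∈ J)

/-- `H ⊆ Λ⁰` is hereditary. -/
def Hereditary (Λ : KGraph k) (H : Set Λ.V) : Prop :=
  ∀ p : Λ.P, Λ.r p ∈ H → Λ.s p ∈ H

/-- `H ⊆ Λ⁰` is saturated. -/
def Saturated (Λ : KGraph k) (H : Set Λ.V) : Prop :=
  ∀ (v : Λ.V) (n : Fin k → ℕ),
    (∀ p : Λ.P, Λ.r p = v → Λ.d p = n → Λ.s p ∈ H) → v ∈ H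

/-- The `ℤᵏ`-order ideal of `T_Λ` generated by a set `X ⊆ Λ⁰` of vertices:
all `x` with `x ≤ Σᵢ ⁿⁱvᵢ` for finitely many `vᵢ ∈ X`, `nᵢ ∈ ℤᵏ`. -/
noncomputable def genIdeal (Λ : KGraph k) (hfin : Λ.RowFinite) (X : Set Λ.V) :
    Set (Tal Λ hfin) :=
  {x | ∃ b : TalF Λ, (∀ q ∈ b.support, q.1 ∈ X) ∧ ∃ z, x + z = tmk Λ hfin b}

end KGraph

namespace KGraph

variable {k : ℕ}

section Aux

variable (Λ : KGraph k) (hfin : Λ.RowFinite)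

lemma tmk_add (a b : TalF Λ) :
    tmk Λ hfin (a + b) = tmk Λ hfin a + tmk Λ hfin b :=
  map_add (TalCon Λ hfin).mk' a b

lemma tmk_zero : tmk Λ hfin 0 = 0 := map_zero (TalCon Λ hfin).mk'

lemma tmk_sum {ι : Type*} (s : Finset ι) (f : ι → TalF Λ) :
    tmk Λ hfin (∑ x ∈ s, f x) = ∑ x ∈ s, tmk Λ hfin (f x) :=
  map_sum (TalCon Λ hfin).mk' f s

lemma tmk_surjective : Function.Surjective (tmk Λ hfin) :=
  AddCon.mk'_surjective

lemma tmk_eq {a b : TalF Λ} :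
    tmk Λ hfin a = tmk Λ hfin b ↔ AddConGen.Rel (TalRel Λ hfin) a b :=
  AddCon.eq _

end Aux

end KGraph
namespace KGraph

variable {k : ℕ}

lemma eq_ident_of_d_eq_zero (Λ : KGraph k) {p : Λ.P} (h : Λ.d p = 0) :
    p = Λ.ident (Λ.r p) := by
  have hu := Λ.factor p 0 0 (by rw [h, add_zero])
  have h1 : Λ.s (Λ.ident (Λ.r p)) = Λ.r p := Λ.s_ident _
  have h2 : Λ.s p = Λ.r (Λ.ident (Λ.s p)) := (Λ.r_ident _).symm
  have w1 : ∃ hc : Λ.s (Λ.ident (Λ.r p)) = Λ.r p,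
      Λ.comp (Λ.ident (Λ.r p)) p hc = p ∧ Λ.d (Λ.ident (Λ.r p)) = 0 ∧ Λ.d p = 0 :=
    ⟨h1, Λ.ident_comp p h1, Λ.d_ident _, h⟩
  have w2 : ∃ hc : Λ.s p = Λ.r (Λ.ident (Λ.s p)),
      Λ.comp p (Λ.ident (Λ.s p)) hc = p ∧ Λ.d p = 0 ∧ Λ.d (Λ.ident (Λ.s p)) = 0 :=
    ⟨h2, Λ.comp_ident p h2, h, Λ.d_ident _⟩
  have := (hu.unique (y₁ := (Λ.ident (Λ.r p), p)) (y₂ := (p, Λ.ident (Λ.s p))) w1 w2)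
  exact (congrArg Prod.fst this).symm

lemma toFinset_zero (Λ : KGraph k) (hfin : Λ.RowFinite) (v : Λ.V) :
    (hfin v 0).toFinset = {Λ.ident v} := by
  ext p
  simp only [Set.Finite.mem_toFinset, Finset.mem_singleton]
  constructor
  · rintro ⟨hr, hd⟩
    rw [eq_ident_of_d_eq_zero Λ hd, hr]
  · rintro rfl
    exact ⟨Λ.r_ident v, Λ.d_ident v⟩

/-- The unique factorization of a path into parts of degree `m` and `n`. -/
noncomputable def factPair (Λ : KGraph k) (m n : Fin k → ℕ) (p : Λ.P) : Λ.P × Λ.P :=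
  if h : Λ.d p = m + n then (Λ.factor p m n h).choose else (p, p)

lemma factPair_spec (Λ : KGraph k) {m n : Fin k → ℕ} {p : Λ.P} (h : Λ.d p = m + n) :
    ∃ hc : Λ.s (factPair Λ m n p).1 = Λ.r (factPair Λ m n p).2,
      Λ.comp _ _ hc = p ∧ Λ.d (factPair Λ m n p).1 = m ∧ Λ.d (factPair Λ m n p).2 = n := by
  rw [factPair, dif_pos h]
  exact (Λ.factor p m n h).choose_spec.1

lemma factPair_unique (Λ : KGraph k) {m n : Fin k → ℕ} {p : Λ.P} (h : Λ.d p = m + n)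
    {q t : Λ.P} (hc : Λ.s q = Λ.r t) (hcomp : Λ.comp q t hc = p)
    (hq : Λ.d q = m) (ht : Λ.d t = n) : factPair Λ m n p = (q, t) := by
  rw [factPair, dif_pos h]
  exact ((Λ.factor p m n h).choose_spec.2 (q, t) ⟨hc, hcomp, hq, ht⟩).symm

lemma sum_decomp (Λ : KGraph k) (hfin : Λ.RowFinite) (v : Λ.V) (m n : Fin k → ℕ)
    {M : Type*} [AddCommMonoid M] (f : Λ.V → M) :
    ∑ p ∈ (hfin v (m + n)).toFinset, f (Λ.s p)
      = ∑ q ∈ (hfin v m).toFinset, ∑ t ∈ (hfin (Λ.s q) n).toFinset, f (Λ.s t) := by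
  classical
  rw [Finset.sum_sigma' ((hfin v m).toFinset) (fun q => (hfin (Λ.s q) n).toFinset)
    (fun q t => f (Λ.s t))]
  refine Finset.sum_nbij'
    (fun p => (⟨(factPair Λ m n p).1, (factPair Λ m n p).2⟩ : Σ _ : Λ.P, Λ.P))
    (fun x => if h : Λ.s x.1 = Λ.r x.2 then Λ.comp x.1 x.2 h else x.1)
    ?_ ?_ ?_ ?_ ?_
  · intro p hp
    rw [Set.Finite.mem_toFinset] at hp
    obtain ⟨hc, hcomp, hq, ht⟩ := factPair_spec Λ hp.2
    rw [Finset.mem_sigma, Set.Finite.mem_toFinset, Set.Finite.mem_toFinset]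
    refine ⟨⟨?_, hq⟩, ⟨hc.symm, ht⟩⟩
    have := Λ.r_comp _ _ hc
    rw [hcomp] at this
    rw [← this, hp.1]
  · rintro ⟨q, t⟩ hx
    rw [Finset.mem_sigma, Set.Finite.mem_toFinset, Set.Finite.mem_toFinset] at hx
    obtain ⟨⟨hrq, hdq⟩, ⟨hrt, hdt⟩⟩ := hx
    have hc : Λ.s q = Λ.r t := hrt.symm
    simp only [dif_pos hc, Set.Finite.mem_toFinset]
    exact ⟨by rw [Λ.r_comp _ _ hc, hrq], by rw [Λ.d_comp _ _ hc, hdq, hdt]⟩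
  · intro p hp
    rw [Set.Finite.mem_toFinset] at hp
    obtain ⟨hc, hcomp, hq, ht⟩ := factPair_spec Λ hp.2
    simp only [dif_pos hc]
    exact hcomp
  · rintro ⟨q, t⟩ hx
    rw [Finset.mem_sigma, Set.Finite.mem_toFinset, Set.Finite.mem_toFinset] at hx
    obtain ⟨⟨hrq, hdq⟩, ⟨hrt, hdt⟩⟩ := hx
    have hc : Λ.s q = Λ.r t := hrt.symm
    simp only [dif_pos hc]
    have hd : Λ.d (Λ.comp q t hc) = m + n := by rw [Λ.d_comp _ _ hc, hdq, hdt]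
    have := factPair_unique Λ hd hc rfl hdq hdt
    rw [this]
  · intro p hp
    rw [Set.Finite.mem_toFinset] at hp
    obtain ⟨hc, hcomp, hq, ht⟩ := factPair_spec Λ hp.2
    have : Λ.s p = Λ.s (factPair Λ m n p).2 := by
      conv_lhs => rw [← hcomp]
      rw [Λ.s_comp _ _ hc]
    rw [this]

end KGraph
namespace KGraph

variable {k : ℕ}

lemma rel_basic (Λ : KGraph k) (hfin : Λ.RowFinite) (v : Λ.V) (n : Fin k → ℤ) (i : Fin k) :
    tmk Λ hfin (Finsupp.single (v, n) 1)
      = tmk Λ hfin (∑ p ∈ (hfin v (Pi.single i 1)).toFinset,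
          Finsupp.single (Λ.s p, n + Pi.single i 1) 1) :=
  (tmk_eq Λ hfin).2 (AddConGen.Rel.of _ _ ⟨v, n, i, rfl, rfl⟩)

lemma cast_single (i : Fin k) :
    (fun j => ((Pi.single i 1 : Fin k → ℕ) j : ℤ)) = (Pi.single i 1 : Fin k → ℤ) := by
  funext j
  by_cases h : j = i
  · subst h; simp
  · simp [Pi.single_apply, h]

lemma tmk_single_eq_sum (Λ : KGraph k) (hfin : Λ.RowFinite) (n : Fin k → ℕ)
    (v : Λ.V) (m : Fin k → ℤ) :
    tmk Λ hfin (Finsupp.single (v, m) 1)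
      = tmk Λ hfin (∑ p ∈ (hfin v n).toFinset,
          Finsupp.single (Λ.s p, m + fun j => ((n j : ℤ))) 1) := by
  suffices h : ∀ (N : ℕ) (n : Fin k → ℕ), (∑ j, n j) = N → ∀ (v : Λ.V) (m : Fin k → ℤ),
      tmk Λ hfin (Finsupp.single (v, m) 1)
        = tmk Λ hfin (∑ p ∈ (hfin v n).toFinset,
            Finsupp.single (Λ.s p, m + fun j => ((n j : ℤ))) 1) by
    exact h _ n rfl v m
  intro N
  induction N with
  | zero =>
    intro n hN v m
    have hn : n = 0 := by
      funext j
      exact Finset.sum_eq_zero_iff.1 hN j (Finset.mem_univ j)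
    subst hn
    rw [toFinset_zero Λ hfin v]
    rw [Finset.sum_singleton, Λ.s_ident]
    have hz : (m + fun j => (((0 : Fin k → ℕ) j : ℤ))) = m := by funext j; simp
    rw [hz]
  | succ N ih =>
    intro n hN v m
    have hex : ∃ i, n i ≠ 0 := by
      by_contra hcon
      push_neg at hcon
      have : (∑ j, n j) = 0 := Finset.sum_eq_zero fun j _ => hcon j
      omega
    obtain ⟨i, hi⟩ := hex
    set n' : Fin k → ℕ := Function.update n i (n i - 1) with hn'
    have hsplit : n = Pi.single i 1 + n' := by
      funext j
      by_cases h : j = i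
      · subst h
        simp only [Pi.add_apply, Pi.single_eq_same, hn', Function.update_self]
        omega
      · simp [Pi.single_apply, h, hn', Function.update_of_ne h]
    have hsum' : (∑ j, n' j) = N := by
      have h1 : (∑ j, n j) = (∑ j, (Pi.single i 1 : Fin k → ℕ) j) + ∑ j, n' j := by
        rw [← Finset.sum_add_distrib]
        exact Finset.sum_congr rfl fun j _ => by rw [hsplit]; rfl
      have h2 : (∑ j, (Pi.single i 1 : Fin k → ℕ) j) = 1 := by
        simp [Finset.sum_pi_single]
      omega
    have hcast : (fun j => ((n j : ℤ))) = (Pi.single i 1 : Fin k → ℤ) + fun j => ((n' j : ℤ)) := by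
      funext j
      rw [hsplit]
      by_cases h : j = i
      · subst h; simp
      · simp [Pi.single_apply, h]
    rw [hcast, hsplit]
    rw [sum_decomp Λ hfin v (Pi.single i 1) n'
      (fun w => Finsupp.single (w, m + ((Pi.single i 1 : Fin k → ℤ) + fun j => ((n' j : ℤ)))) 1)]
    rw [rel_basic Λ hfin v m i]
    rw [tmk_sum, tmk_sum]
    refine Finset.sum_congr rfl fun q _ => ?_
    rw [ih n' hsum' (Λ.s q) (m + Pi.single i 1)]
    congr 1
    refine Finset.sum_congr rfl fun t _ => ?_
    congr 2
    funext j
    simp only [Pi.add_apply]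
    ring

end KGraph
namespace KGraph

variable {k : ℕ}

lemma shiftF_add (Λ : KGraph k) (p : Fin k → ℤ) (a b : TalF Λ) :
    shiftF Λ p (a + b) = shiftF Λ p a + shiftF Λ p b :=
  Finsupp.mapDomain_add

lemma shiftF_single (Λ : KGraph k) (p : Fin k → ℤ) (q : Λ.V × (Fin k → ℤ)) (c : ℕ) :
    shiftF Λ p (Finsupp.single q c) = Finsupp.single (q.1, q.2 + p) c :=
  Finsupp.mapDomain_single

lemma mem_support_add {Λ : KGraph k} {a b : TalF Λ} {q : Λ.V × (Fin k → ℤ)} :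
    q ∈ (a + b).support ↔ q ∈ a.support ∨ q ∈ b.support := by
  simp only [Finsupp.mem_support_iff, Finsupp.add_apply]
  omega

lemma con_shift (Λ : KGraph k) (hfin : Λ.RowFinite) (p : Fin k → ℤ) {a b : TalF Λ}
    (h : AddConGen.Rel (TalRel Λ hfin) a b) :
    AddConGen.Rel (TalRel Λ hfin) (shiftF Λ p a) (shiftF Λ p b) := by
  induction h with
  | of x y hxy =>
    obtain ⟨v, n, i, rfl, rfl⟩ := hxy
    refine AddConGen.Rel.of _ _ ⟨v, n + p, i, ?_, ?_⟩
    · exact shiftF_single Λ p (v, n) 1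
    · rw [shiftF]
      rw [show Finsupp.mapDomain (fun q : Λ.V × (Fin k → ℤ) => (q.1, q.2 + p))
            = ⇑(Finsupp.mapDomain.addMonoidHom (fun q : Λ.V × (Fin k → ℤ) => (q.1, q.2 + p))) from
            rfl, map_sum]
      refine Finset.sum_congr rfl fun t _ => ?_
      rw [Finsupp.mapDomain.addMonoidHom_apply, Finsupp.mapDomain_single]
      congr 2
      funext j
      simp only [Pi.add_apply]
      ring
  | refl x => exact AddConGen.Rel.refl _
  | symm _ ih => exact AddConGen.Rel.symm ih
  | trans _ _ ih1 ih2 => exact AddConGen.Rel.trans ih1 ih2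
  | add _ _ ih1 ih2 =>
    rw [shiftF_add, shiftF_add]
    exact AddConGen.Rel.add ih1 ih2

lemma con_supp (Λ : KGraph k) (hfin : Λ.RowFinite) (H : Set Λ.V)
    (hher : Hereditary Λ H) (hsat : Saturated Λ H) {a b : TalF Λ}
    (h : AddConGen.Rel (TalRel Λ hfin) a b) :
    ((∀ q ∈ a.support, q.1 ∈ H) ↔ (∀ q ∈ b.support, q.1 ∈ H)) := by
  induction h with
  | of x y hxy =>
    obtain ⟨v, n, i, rfl, rfl⟩ := hxy
    constructor
    · intro ha q hq
      have hv : v ∈ H := by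
        refine ha (v, n) ?_
        rw [Finsupp.support_single_ne_zero _ one_ne_zero]
        exact Finset.mem_singleton_self _
      rw [Finsupp.mem_support_iff] at hq
      rw [Finsupp.finset_sum_apply] at hq
      obtain ⟨t, ht, hne⟩ := Finset.exists_ne_zero_of_sum_ne_zero hq
      rw [Set.Finite.mem_toFinset] at ht
      have hq1 : q = (Λ.s t, n + Pi.single i 1) := by
        by_contra hcon
        exact hne (Finsupp.single_eq_of_ne fun he => hcon he)
      rw [hq1]
      exact hher t (by rw [ht.1]; exact hv)
    · intro hb
      have hv : v ∈ H := by
        refine hsat v (Pi.single i 1) fun t hr hd => ?_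
        have htm : t ∈ (hfin v (Pi.single i 1)).toFinset := by
          rw [Set.Finite.mem_toFinset]; exact ⟨hr, hd⟩
        refine hb (Λ.s t, n + Pi.single i 1) ?_
        rw [Finsupp.mem_support_iff, Finsupp.finset_sum_apply]
        intro hzero
        rw [Finset.sum_eq_zero_iff] at hzero
        have := hzero t htm
        rw [Finsupp.single_eq_same] at this
        exact one_ne_zero this
      intro q hq
      rw [Finsupp.support_single_ne_zero _ one_ne_zero, Finset.mem_singleton] at hq
      rw [hq]
      exact hv
  | refl x => exact Iff.rfl
  | symm _ ih => exact ih.symm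
  | trans _ _ ih1 ih2 => exact ih1.trans ih2
  | add _ _ ih1 ih2 =>
    constructor
    · intro hall q hq
      rw [mem_support_add] at hq
      rcases hq with hq | hq
      · exact ih1.1 (fun r hr => hall r (mem_support_add.2 (Or.inl hr))) q hq
      · exact ih2.1 (fun r hr => hall r (mem_support_add.2 (Or.inr hr))) q hq
    · intro hall q hq
      rw [mem_support_add] at hq
      rcases hq with hq | hq
      · exact ih1.2 (fun r hr => hall r (mem_support_add.2 (Or.inl hr))) q hq
      · exact ih2.2 (fun r hr => hall r (mem_support_add.2 (Or.inr hr))) q hq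

end KGraph
namespace KGraph

variable {k : ℕ}

lemma nsmul_mem (Λ : KGraph k) (hfin : Λ.RowFinite) {J : Set (Tal Λ hfin)}
    (hJ : IsOrderIdeal Λ hfin J) (c : ℕ) {x : Tal Λ hfin} (hx : x ∈ J) : c • x ∈ J := by
  induction c with
  | zero => rw [zero_nsmul]; exact hJ.1
  | succ c ih => rw [succ_nsmul]; exact hJ.2.1 _ _ ih hx

lemma sum_mem_ideal (Λ : KGraph k) (hfin : Λ.RowFinite) {J : Set (Tal Λ hfin)}
    (hJ : IsOrderIdeal Λ hfin J) {ι : Type*} (s : Finset ι) (f : ι → Tal Λ hfin)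
    (h : ∀ x ∈ s, f x ∈ J) : (∑ x ∈ s, f x) ∈ J := by
  classical
  induction s using Finset.induction with
  | empty => simpa using hJ.1
  | insert _ _ hx ih =>
    rw [Finset.sum_insert hx]
    exact hJ.2.1 _ _ (h _ (Finset.mem_insert_self _ _))
      (ih fun y hy => h y (Finset.mem_insert_of_mem hy))

/-- If every vertex appearing in `b` has its degree-zero generator in `J`,
then `tmk b ∈ J`. -/
lemma tmk_mem_of_support (Λ : KGraph k) (hfin : Λ.RowFinite) {J : Set (Tal Λ hfin)}
    (hJ : IsOrderIdeal Λ hfin J) (b : TalF Λ)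
    (hb : ∀ q ∈ b.support, tmk Λ hfin (Finsupp.single (q.1, (0 : Fin k → ℤ)) 1) ∈ J) :
    tmk Λ hfin b ∈ J := by
  have hdecomp : b = ∑ q ∈ b.support, Finsupp.single q (b q) := by
    conv_lhs => rw [← Finsupp.sum_single b]
    rw [Finsupp.sum]
  rw [hdecomp, tmk_sum]
  refine sum_mem_ideal Λ hfin hJ _ _ fun q hq => ?_
  have h1 : tmk Λ hfin (Finsupp.single q 1) ∈ J := by
    have := hJ.2.2.2 q.2 _ (hb q hq)
    rw [shiftF_single] at this
    simpa using this
  have h2 : Finsupp.single q (b q) = (b q) • Finsupp.single q 1 := by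
    rw [Finsupp.smul_single]
    norm_num
  have h3 : tmk Λ hfin ((b q) • Finsupp.single q 1) = (b q) • tmk Λ hfin (Finsupp.single q 1) :=
    map_nsmul (TalCon Λ hfin).mk' _ _
  rw [h2, h3]
  exact nsmul_mem Λ hfin hJ _ h1

lemma single_mem_of_mem (Λ : KGraph k) (hfin : Λ.RowFinite) {J : Set (Tal Λ hfin)}
    (hJ : IsOrderIdeal Λ hfin J) {a : TalF Λ} (ha : tmk Λ hfin a ∈ J)
    {q : Λ.V × (Fin k → ℤ)} (hq : q ∈ a.support) :
    tmk Λ hfin (Finsupp.single (q.1, (0 : Fin k → ℤ)) 1) ∈ J := by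
  have hq0 : a q ≠ 0 := Finsupp.mem_support_iff.1 hq
  have h1 : a = Finsupp.single q (a q) + a.erase q := (Finsupp.single_add_erase q a).symm
  have h2 : tmk Λ hfin (Finsupp.single q (a q)) ∈ J := by
    refine hJ.2.2.1 _ (tmk Λ hfin (a.erase q)) ?_
    rw [← tmk_add, ← h1]; exact ha
  have h3 : Finsupp.single q (a q) = Finsupp.single q 1 + Finsupp.single q (a q - 1) := by
    rw [← Finsupp.single_add]
    congr 1
    omega
  have h4 : tmk Λ hfin (Finsupp.single q 1) ∈ J := by
    refine hJ.2.2.1 _ (tmk Λ hfin (Finsupp.single q (a q - 1))) ?_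
    rw [← tmk_add, ← h3]; exact h2
  have h5 := hJ.2.2.2 (-q.2) _ h4
  rw [shiftF_single] at h5
  simpa using h5

end KGraph
open KGraph in
/-- The assignments `H ↦ ⟨H⟩` and `J ↦ H_J` are mutually inverse order-preserving
bijections between the lattice of hereditary saturated subsets of `Λ⁰` and the
lattice of `ℤᵏ`-order ideals of `T_Λ`; hence the two lattices are isomorphic. -/
theorem stmt12 {k : ℕ} (Λ : KGraph k) (hfin : Λ.RowFinite) (hns : Λ.NoSources) :
    (∀ H : Set Λ.V, Hereditary Λ H → Saturated Λ H →
      IsOrderIdeal Λ hfin (genIdeal Λ hfin H)) ∧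
    (∀ J : Set (Tal Λ hfin), IsOrderIdeal Λ hfin J →
      Hereditary Λ {v | tmk Λ hfin (Finsupp.single (v, (0 : Fin k → ℤ)) 1) ∈ J} ∧
      Saturated Λ {v | tmk Λ hfin (Finsupp.single (v, (0 : Fin k → ℤ)) 1) ∈ J}) ∧
    (∀ H : Set Λ.V, Hereditary Λ H → Saturated Λ H →
      {v | tmk Λ hfin (Finsupp.single (v, (0 : Fin k → ℤ)) 1) ∈ genIdeal Λ hfin H} = H) ∧
    (∀ J : Set (Tal Λ hfin), IsOrderIdeal Λ hfin J →
      genIdeal Λ hfin {v | tmk Λ hfin (Finsupp.single (v, (0 : Fin k → ℤ)) 1) ∈ J} = J) ∧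
    (∀ H₁ H₂ : Set Λ.V, H₁ ⊆ H₂ → genIdeal Λ hfin H₁ ⊆ genIdeal Λ hfin H₂) ∧
    (∀ J₁ J₂ : Set (Tal Λ hfin), J₁ ⊆ J₂ →
      {v | tmk Λ hfin (Finsupp.single (v, (0 : Fin k → ℤ)) 1) ∈ J₁} ⊆
      {v | tmk Λ hfin (Finsupp.single (v, (0 : Fin k → ℤ)) 1) ∈ J₂}) := by
  classical
  refine ⟨?p1, ?p2, ?p3, ?p4, ?p5, ?p6⟩
  case p1 =>
    intro H _ _
    refine ⟨⟨0, by simp, 0, by rw [tmk_zero]; simp⟩, ?_, ?_, ?_⟩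
    · rintro a b ⟨b1, hb1, z1, he1⟩ ⟨b2, hb2, z2, he2⟩
      refine ⟨b1 + b2, ?_, z1 + z2, ?_⟩
      · intro q hq
        rcases mem_support_add.1 hq with h | h
        · exact hb1 q h
        · exact hb2 q h
      · rw [tmk_add, ← he1, ← he2, add_add_add_comm]
    · rintro a b ⟨c, hc, z, he⟩
      exact ⟨c, hc, b + z, by rw [← add_assoc]; exact he⟩
    · rintro p a ⟨b, hb, z, he⟩
      obtain ⟨c, rfl⟩ := tmk_surjective Λ hfin z
      rw [← tmk_add] at he
      have hcon := con_shift Λ hfin p ((tmk_eq Λ hfin).1 he)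
      rw [shiftF_add] at hcon
      refine ⟨shiftF Λ p b, ?_, tmk Λ hfin (shiftF Λ p c), ?_⟩
      · intro q hq
        rw [shiftF] at hq
        obtain ⟨q', hq', he'⟩ := Finset.mem_image.1 (Finsupp.mapDomain_support hq)
        rw [← he']
        exact hb q' hq'
      · rw [← tmk_add]
        exact (tmk_eq Λ hfin).2 hcon
  case p2 =>
    intro J hJ
    constructor
    · intro p hp
      have hkey := tmk_single_eq_sum Λ hfin (Λ.d p) (Λ.r p) 0
      have hpmem : p ∈ (hfin (Λ.r p) (Λ.d p)).toFinset := by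
        rw [Set.Finite.mem_toFinset]; exact ⟨rfl, rfl⟩
      rw [← Finset.add_sum_erase _ _ hpmem, tmk_add] at hkey
      have h1 : tmk Λ hfin
          (Finsupp.single (Λ.s p, (0 : Fin k → ℤ) + fun j => ((Λ.d p j : ℤ))) 1) ∈ J :=
        hJ.2.2.1 _ _ (by rw [← hkey]; exact hp)
      have h2 := hJ.2.2.2 (-(fun j => ((Λ.d p j : ℤ)))) _ h1
      rw [shiftF_single] at h2
      have he : ((((0 : Fin k → ℤ) + fun j => ((Λ.d p j : ℤ)))) +
          -(fun j => ((Λ.d p j : ℤ)))) = 0 := by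
        funext j; simp
      rw [he] at h2
      exact h2
    · intro v n hsrc
      show tmk Λ hfin (Finsupp.single (v, (0 : Fin k → ℤ)) 1) ∈ J
      rw [tmk_single_eq_sum Λ hfin n v 0, tmk_sum]
      refine sum_mem_ideal Λ hfin hJ _ _ fun p hp => ?_
      rw [Set.Finite.mem_toFinset] at hp
      have h0 : tmk Λ hfin (Finsupp.single (Λ.s p, (0 : Fin k → ℤ)) 1) ∈ J :=
        hsrc p hp.1 hp.2
      have h1 := hJ.2.2.2 (fun j => ((n j : ℤ))) _ h0
      rw [shiftF_single] at h1
      exact h1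
  case p3 =>
    intro H hher hsat
    ext v
    simp only [Set.mem_setOf_eq]
    constructor
    · rintro ⟨b, hb, z, he⟩
      obtain ⟨c, rfl⟩ := tmk_surjective Λ hfin z
      rw [← tmk_add] at he
      have hsupp := (con_supp Λ hfin H hher hsat ((tmk_eq Λ hfin).1 he)).2 hb
      refine hsupp (v, 0) ?_
      rw [mem_support_add]
      left
      rw [Finsupp.support_single_ne_zero _ one_ne_zero]
      exact Finset.mem_singleton_self _
    · intro hv
      refine ⟨Finsupp.single (v, 0) 1, ?_, 0, add_zero _⟩
      intro q hq
      rw [Finsupp.support_single_ne_zero _ one_ne_zero, Finset.mem_singleton] at hq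
      rw [hq]; exact hv
  case p4 =>
    intro J hJ
    ext x
    constructor
    · rintro ⟨b, hb, z, he⟩
      have hbJ : tmk Λ hfin b ∈ J := tmk_mem_of_support Λ hfin hJ b hb
      exact hJ.2.2.1 x z (by rw [he]; exact hbJ)
    · intro hx
      obtain ⟨a, rfl⟩ := tmk_surjective Λ hfin x
      refine ⟨a, ?_, 0, add_zero _⟩
      intro q hq
      exact single_mem_of_mem Λ hfin hJ hx hq
  case p5 =>
    rintro H1 H2 hsub x ⟨b, hb, z, he⟩
    exact ⟨b, fun q hq => hsub (hb q hq), z, he⟩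
  case p6 =>
    intro J1 J2 hsub v hv
    exact hsub hv
end
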